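/- If μ is a singular cardinal, then every <μ-semigroup can be uniquely expanded to a ≤μ-semigroup: the product of any μ-indexed sequence is defined via any strictly increasing continuous cofinal sequence (β_j)_{j<cf(μ)} in μ with β_0 = 0 by Π_{i<μ} a_i = Π_{j<cf(μ)} Π_{i∈[β_j,β_{j+1})} a_i (well-defined since cf(μ) < μ and each β_{j+1} < μ), this value is independent of the chosen cofinal sequence, and the expanded structure satisfies (U) and (Ord). -/

import Mathlib

universe u

open Ordinal Cardinal

/-- `π : δ → η` is a surjective order-preserving map between the ordinals `δ` and `η`
whose fiber over each `j < η` is the (nonempty) interval `[β j, β j + ε j)`. -/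
def IsFiberDecomp (δ η : Ordinal.{u}) (π β ε : Ordinal.{u} → Ordinal.{u}) : Prop :=
  (∀ i < δ, π i < η) ∧
  (∀ i < δ, ∀ i' < δ, i ≤ i' → π i ≤ π i') ∧
  (∀ j < η, ∃ i < δ, π i = j) ∧
  (∀ j < η, ∀ i : Ordinal.{u}, (i < δ ∧ π i = j) ↔ (β j ≤ i ∧ i < β j + ε j))

/-- A partial ordinal semigroup: a partial product (`none` = undefined) on
ordinal-indexed sequences (a sequence indexed by `δ` is represented by a total function,
and the product only depends on the values at indices `< δ`), satisfying axiom (U)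
(singleton products) and axiom (Ord) (generalized associativity: whenever the product of
`(a i)_{i<δ}` is defined and `π : δ → η` is a surjective order-preserving map with
interval fibers `[β j, β j + ε j)`, all the fiber products and the `η`-indexed product of
the fiber products are defined, and the latter equals the product over `δ`). -/
structure PartialOrdinalSemigroup (S : Type u) : Type (u + 1) where
  prod : Ordinal.{u} → (Ordinal.{u} → S) → Option S
  congr : ∀ δ a b, (∀ i < δ, a i = b i) → prod δ a = prod δ b
  unary : ∀ a, prod 1 a = some (a 0)
  ord : ∀ δ η (a : Ordinal.{u} → S) (π β ε : Ordinal.{u} → Ordinal.{u}) (s : S),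
    IsFiberDecomp δ η π β ε → prod δ a = some s →
    ∃ b : Ordinal.{u} → S,
      (∀ j < η, prod (ε j) (fun γ => a (β j + γ)) = some (b j)) ∧
      prod η b = some s

/-- The product of `P` is defined exactly on sequences whose index ordinal satisfies `D`. -/
def DomExactly {S : Type u} (P : PartialOrdinalSemigroup S)
    (D : Ordinal.{u} → Prop) : Prop :=
  ∀ δ a, (P.prod δ a).isSome ↔ D δ

/-- `Q` extends `P`: every product defined in `P` is defined in `Q` with the same value. -/
def Extends {S : Type u} (Q P : PartialOrdinalSemigroup S) : Prop :=
  ∀ δ a s, P.prod δ a = some s → Q.prod δ a = some s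

namespace SingExtAux

theorem sub_lt_sub_iff {a x y : Ordinal.{u}} (hx : a ≤ x) (hy : a ≤ y) :
    x - a < y - a ↔ x < y := by
  rw [← add_lt_add_iff_left a, Ordinal.add_sub_cancel_of_le hx,
    Ordinal.add_sub_cancel_of_le hy]

theorem sub_le_sub_iff {a x y : Ordinal.{u}} (hx : a ≤ x) (hy : a ≤ y) :
    x - a ≤ y - a ↔ x ≤ y := by
  rw [← add_le_add_iff_left a, Ordinal.add_sub_cancel_of_le hx,
    Ordinal.add_sub_cancel_of_le hy]

theorem zero_or_succ_or_limit' (o : Ordinal.{u}) :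
    o = 0 ∨ (∃ a, o = Order.succ a) ∨ Order.IsSuccLimit o := by
  rcases Ordinal.zero_or_succ_or_isSuccLimit o with h | ⟨a, ha⟩ | h
  exacts [Or.inl h, Or.inr (Or.inl ⟨a, ha.symm⟩), Or.inr (Or.inr h)]

theorem pos_sub_of_lt {x y : Ordinal.{u}} (h : x < y) : 0 < y - x := by
  rcases eq_zero_or_pos (y - x) with h0 | h0
  · have := Ordinal.add_sub_cancel_of_le h.le
    rw [h0, add_zero] at this
    exact absurd this (ne_of_lt h)
  · exact h0

theorem sub_sub_cancel {a x y : Ordinal.{u}} (hax : a ≤ x) (hxy : x ≤ y) :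
    (y - a) - (x - a) = y - x := by
  have h1 : (x - a) + ((y - a) - (x - a)) = y - a :=
    Ordinal.add_sub_cancel_of_le ((sub_le_sub_iff hax (hax.trans hxy)).2 hxy)
  have h2 : (x - a) + (y - x) = y - a := by
    rw [← add_right_inj a, ← add_assoc, Ordinal.add_sub_cancel_of_le hax,
      Ordinal.add_sub_cancel_of_le hxy, Ordinal.add_sub_cancel_of_le (hax.trans hxy)]
  exact (add_right_inj (x - a)).1 (h1.trans h2.symm)

theorem succ_le_of_lt' {j η : Ordinal.{u}} (h : j < η) : j + 1 ≤ η := by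
  rw [Ordinal.add_one_eq_succ]; exact Order.succ_le_of_lt h

/-- An interval tiling of `δ` indexed by `η`: cut points `c j` for `j ≤ η`. -/
structure IsTiling (δ η : Ordinal.{u}) (c : Ordinal.{u} → Ordinal.{u}) : Prop where
  zero : c 0 = 0
  top : c η = δ
  mono : ∀ ⦃j⦄, j ≤ η → ∀ ⦃k⦄, k ≤ η → j < k → c j < c k
  cont : ∀ ⦃j⦄, j ≤ η → Order.IsSuccLimit j → ∀ x, (∀ k < j, c k ≤ x) → c j ≤ x

namespace IsTiling

variable {δ η : Ordinal.{u}} {c : Ordinal.{u} → Ordinal.{u}}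

theorem mono_le (T : IsTiling δ η c) {j k : Ordinal.{u}} (hjk : j ≤ k) (hk : k ≤ η) :
    c j ≤ c k := by
  rcases eq_or_lt_of_le hjk with rfl | h
  · exact le_rfl
  · exact (T.mono (hjk.trans hk) hk h).le

theorem lt_top (T : IsTiling δ η c) {j : Ordinal.{u}} (hj : j < η) : c j < δ := by
  have := T.mono hj.le le_rfl hj
  rwa [T.top] at this

theorem le_top' (T : IsTiling δ η c) {j : Ordinal.{u}} (hj : j ≤ η) : c j ≤ δ := by
  have := T.mono_le hj le_rfl
  rwa [T.top] at this

theorem piece_pos (T : IsTiling δ η c) {j : Ordinal.{u}} (hj : j < η) : 0 < c (j + 1) - c j :=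
  pos_sub_of_lt (T.mono hj.le (succ_le_of_lt' hj) (lt_add_of_pos_right j one_pos))

theorem reflect (T : IsTiling δ η c) {j k : Ordinal.{u}} (hj : j ≤ η) (hk : k ≤ η)
    (h : c j < c k) : j < k := by
  by_contra hh
  exact absurd (T.mono_le (not_lt.1 hh) hj) (not_le.2 h)

theorem inj' (T : IsTiling δ η c) {j k : Ordinal.{u}} (hj : j ≤ η) (hk : k ≤ η)
    (h : c j = c k) : j = k := by
  rcases lt_trichotomy j k with hlt | he | hlt
  · exact absurd h (ne_of_lt (T.mono hj hk hlt))
  · exact he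
  · exact absurd h.symm (ne_of_lt (T.mono hk hj hlt))

theorem le_self (T : IsTiling δ η c) : ∀ j, j ≤ η → j ≤ c j := by
  intro j
  induction j using Ordinal.induction with
  | h j IH =>
    intro hj
    by_contra hh
    have hcj : c j < j := not_le.1 hh
    have h1 : c j ≤ c (c j) := IH (c j) hcj (hcj.le.trans hj)
    have h2 : c (c j) < c j := T.mono (hcj.le.trans hj) hj hcj
    exact absurd (h1.trans_lt h2) (lt_irrefl _)

end IsTiling

namespace IsTiling

variable {δ η : Ordinal.{u}} {c : Ordinal.{u} → Ordinal.{u}}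

theorem cover (T : IsTiling δ η c) {x : Ordinal.{u}} (hx : x < δ) :
    ∃ j < η, c j ≤ x ∧ x < c (j + 1) := by
  classical
  -- least index whose cut is above x
  set A : Set Ordinal.{u} := {j | j ≤ η ∧ x < c j} with hA
  have hηA : η ∈ A := ⟨le_rfl, by rwa [T.top]⟩
  have hne : A.Nonempty := ⟨η, hηA⟩
  set m := sInf A with hm
  have hmA : m ∈ A := csInf_mem hne
  have hmin : ∀ k < m, k ∉ A := fun k hk hkA => absurd (csInf_le (OrderBot.bddBelow A) hkA)
    (not_le.2 hk)
  have hm0 : m ≠ 0 := by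
    intro h0
    have : x < c 0 := by rw [← h0]; exact hmA.2
    rw [T.zero] at this
    exact absurd this ((not_lt_zero (a := x)))
  rcases SingExtAux.zero_or_succ_or_limit' m with h | ⟨k, hk⟩ | hlim
  · exact absurd h hm0
  · -- m = k + 1
    rw [← Ordinal.add_one_eq_succ] at hk
    have hkm : k < m := by rw [hk]; exact lt_add_of_pos_right k one_pos
    have hkη : k < η := lt_of_lt_of_le hkm hmA.1
    have hknA : k ∉ A := hmin k hkm
    have hcx : c k ≤ x := by
      by_contra hh
      exact hknA ⟨hkη.le, not_le.1 hh⟩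
    exact ⟨k, hkη, hcx, by rw [← hk]; exact hmA.2⟩
  · exfalso
    have : c m ≤ x := by
      apply T.cont hmA.1 hlim
      intro k hk
      by_contra hh
      exact hmin k hk ⟨hk.le.trans hmA.1, not_le.1 hh⟩
    exact absurd hmA.2 (not_lt.2 this)

end IsTiling

/-- The index map of a tiling. -/
noncomputable def piT (c : Ordinal.{u} → Ordinal.{u}) : Ordinal.{u} → Ordinal.{u} :=
  fun x => sInf {j | x < c (j + 1)}

theorem piT_spec {δ η : Ordinal.{u}} {c : Ordinal.{u} → Ordinal.{u}} (T : IsTiling δ η c)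
    {x : Ordinal.{u}} (hx : x < δ) :
    piT c x < η ∧ c (piT c x) ≤ x ∧ x < c (piT c x + 1) := by
  obtain ⟨j, hj, hcj, hcj1⟩ := T.cover hx
  set B : Set Ordinal.{u} := {j | x < c (j + 1)} with hB
  have hne : B.Nonempty := ⟨j, hcj1⟩
  have hmB : piT c x ∈ B := csInf_mem hne
  have hmin : ∀ k < piT c x, k ∉ B := fun k hk hkB =>
    absurd (csInf_le (OrderBot.bddBelow B) hkB) (not_le.2 hk)
  have hmj : piT c x ≤ j := csInf_le (OrderBot.bddBelow B) hcj1
  have hmη : piT c x < η := lt_of_le_of_lt hmj hj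
  refine ⟨hmη, ?_, hmB⟩
  rcases SingExtAux.zero_or_succ_or_limit' (piT c x) with h0 | ⟨l, hl⟩ | hlim
  · rw [h0, T.zero]; exact (zero_le (a := x))
  · rw [← Ordinal.add_one_eq_succ] at hl
    have hlm : l < piT c x := by rw [hl]; exact lt_add_of_pos_right l one_pos
    have := hmin l hlm
    rw [hl]
    exact not_lt.1 this
  · apply T.cont hmη.le hlim
    intro l hl
    have hl1 : l + 1 ≤ piT c x := succ_le_of_lt' hl
    have : c l ≤ c (l + 1) :=
      T.mono_le ((le_self_add (a := l) (b := 1))) (hl1.trans hmη.le)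
    exact this.trans (not_lt.1 (hmin l hl))

theorem toDecomp {δ η : Ordinal.{u}} {c : Ordinal.{u} → Ordinal.{u}} (T : IsTiling δ η c)
    (hη : 0 < η) :
    IsFiberDecomp δ η (piT c) c (fun j => c (j + 1) - c j) := by
  have hδ : 0 < δ := by
    have := T.mono ((zero_le (a := η))) le_rfl hη
    rwa [T.zero, T.top] at this
  refine ⟨fun i hi => (piT_spec T hi).1, ?_, ?_, ?_⟩
  · intro i hi i' hi' hii
    have h1 := piT_spec T hi
    have h2 := piT_spec T hi'
    have : c (piT c i) < c (piT c i' + 1) :=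
      lt_of_le_of_lt (h1.2.1.trans hii) h2.2.2
    have hlt : piT c i < piT c i' + 1 :=
      T.reflect h1.1.le (succ_le_of_lt' h2.1) this
    rwa [Ordinal.add_one_eq_succ, Order.lt_succ_iff] at hlt
  · intro j hj
    refine ⟨c j, T.lt_top hj, ?_⟩
    have h := piT_spec T (T.lt_top hj)
    have h1 : piT c (c j) ≤ j := by
      by_contra hh
      have : c j < c (piT c (c j)) := T.mono hj.le h.1.le (not_le.1 hh)
      exact absurd h.2.1 (not_le.2 this)
    have h2 : j ≤ piT c (c j) := by
      by_contra hh
      have hj1 : piT c (c j) + 1 ≤ j := succ_le_of_lt' (not_le.1 hh)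
      have : c (piT c (c j) + 1) ≤ c j := T.mono_le hj1 hj.le
      exact absurd h.2.2 (not_lt.2 this)
    exact le_antisymm h1 h2
  · intro j hj i
    have hj1 : j + 1 ≤ η := succ_le_of_lt' hj
    have hcc : c j + (c (j + 1) - c j) = c (j + 1) :=
      Ordinal.add_sub_cancel_of_le (T.mono_le ((le_self_add (a := j) (b := 1))) hj1)
    rw [hcc]
    constructor
    · rintro ⟨hi, rfl⟩
      exact ⟨(piT_spec T hi).2.1, (piT_spec T hi).2.2⟩
    · rintro ⟨h1, h2⟩
      have hiδ : i < δ := lt_of_lt_of_le h2 (T.le_top' hj1)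
      refine ⟨hiδ, ?_⟩
      have h := piT_spec T hiδ
      have ha : piT c i ≤ j := by
        by_contra hh
        have : c (j + 1) ≤ c (piT c i) := T.mono_le (succ_le_of_lt' (not_le.1 hh)) h.1.le
        exact absurd (h.2.1.trans_lt h2) (not_lt.2 this)
      have hb : j ≤ piT c i := by
        by_contra hh
        have : c (piT c i + 1) ≤ c j := T.mono_le (succ_le_of_lt' (not_le.1 hh)) hj.le
        exact absurd (h1.trans_lt h.2.2) (not_lt.2 this)
      exact le_antisymm ha hb

theorem subTiling {δ η : Ordinal.{u}} {c : Ordinal.{u} → Ordinal.{u}} (T : IsTiling δ η c)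
    {j k : Ordinal.{u}} (hjk : j < k) (hk : k ≤ η) :
    IsTiling (c k - c j) (k - j) (fun t => c (j + t) - c j) := by
  have hjη : j ≤ η := hjk.le.trans hk
  have hjt : ∀ t, t ≤ k - j → j + t ≤ η := by
    intro t ht
    have : j + t ≤ j + (k - j) := add_le_add_right ht j
    rw [Ordinal.add_sub_cancel_of_le hjk.le] at this
    exact this.trans hk
  refine ⟨?_, ?_, ?_, ?_⟩
  · simp [Ordinal.sub_self]
  · rw [Ordinal.add_sub_cancel_of_le hjk.le]
  · intro t ht t' ht' htt
    have h1 : c (j + t) < c (j + t') :=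
      T.mono (hjt t ht) (hjt t' ht') (add_lt_add_right htt j)
    exact (sub_lt_sub_iff (T.mono_le ((le_self_add (a := j) (b := t))) (hjt t ht))
      (T.mono_le ((le_self_add (a := j) (b := t'))) (hjt t' ht'))).2 h1
  · intro t ht hlim x hx
    have hjtlim : Order.IsSuccLimit (j + t) := Ordinal.isSuccLimit_add j hlim
    have h1 : c (j + t) ≤ c j + x := by
      apply T.cont (hjt t ht) hjtlim
      intro m hm
      rcases le_or_gt m j with hmj | hjm
      · exact (T.mono_le hmj hjη).trans ((le_self_add (a := _) (b := _)))
      · have hmeq : j + (m - j) = m := Ordinal.add_sub_cancel_of_le hjm.le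
        have hw : m - j < t := by
          have : j + (m - j) < j + t := by rwa [hmeq]
          exact lt_of_add_lt_add_left this
        have := hx (m - j) hw
        rw [hmeq] at this
        exact (Ordinal.sub_le.1 this)
    exact Ordinal.sub_le.2 h1

theorem compTiling {δ θ η : Ordinal.{u}} {c e : Ordinal.{u} → Ordinal.{u}}
    (Tc : IsTiling δ θ c) (Te : IsTiling θ η e) :
    IsTiling δ η (fun j => c (e j)) := by
  refine ⟨?_, ?_, ?_, ?_⟩
  · rw [Te.zero, Tc.zero]
  · rw [Te.top, Tc.top]
  · intro j hj k hk hjk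
    exact Tc.mono (Te.le_top' hj) (Te.le_top' hk) (Te.mono hj hk hjk)
  · intro j hj hlim x hx
    have hej : Order.IsSuccLimit (e j) := by
      rcases SingExtAux.zero_or_succ_or_limit' (e j) with h0 | ⟨m, hm⟩ | h
      · exfalso
        have : j = 0 := Te.inj' hj ((zero_le (a := η))) (by rw [h0, Te.zero])
        exact hlim.pos.ne' this
      · exfalso
        rw [← Ordinal.add_one_eq_succ] at hm
        have hm' : e j ≤ m := by
          apply Te.cont hj hlim
          intro k hk
          have : e k < e j := Te.mono (hk.le.trans hj) hj hk
          rw [hm] at this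
          rwa [Ordinal.add_one_eq_succ, Order.lt_succ_iff] at this
        rw [hm] at hm'
        exact absurd hm' (by simpa using (lt_add_of_pos_right m one_pos).not_ge)
      · exact h
    apply Tc.cont (Te.le_top' hj) hej
    intro m hm
    have : ∃ k < j, m < e k := by
      by_contra hh
      push_neg at hh
      exact absurd (Te.cont hj hlim m hh) (not_le.2 hm)
    obtain ⟨k, hkj, hmk⟩ := this
    exact (Tc.mono_le hmk.le (Te.le_top' (hkj.le.trans hj))).trans (hx k hkj)

/-- All the structural facts extracted from a fiber decomposition of a positive ordinal. -/
theorem decomp_facts {δ η : Ordinal.{u}} {π β ε : Ordinal.{u} → Ordinal.{u}}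
    (h : IsFiberDecomp δ η π β ε) (hδ : 0 < δ) :
    0 < η ∧ IsTiling δ η (fun j => if j = η then δ else β j) ∧
      (∀ j < η, (if j + 1 = η then δ else β (j + 1)) - (if j = η then δ else β j) = ε j) ∧
      η ≤ δ ∧ (∀ j < η, β j + ε j ≤ δ) := by
  obtain ⟨h1, h2, h3, h4⟩ := h
  have hη : 0 < η := ((zero_le (a := (π 0)))).trans_lt (h1 0 hδ)
  -- basic fiber facts
  have hfib : ∀ j < η, β j < δ ∧ π (β j) = j ∧ 0 < ε j ∧ β j + ε j ≤ δ := by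
    intro j hj
    obtain ⟨i, hi, hπi⟩ := h3 j hj
    have hmem : β j ≤ i ∧ i < β j + ε j := (h4 j hj i).1 ⟨hi, hπi⟩
    have hεpos : 0 < ε j := by
      rcases eq_zero_or_pos (ε j) with h0 | h0
      · rw [h0, add_zero] at hmem
        exact absurd hmem.2 (not_lt.2 hmem.1)
      · exact h0
    have hsum : β j + ε j ≤ δ := by
      by_contra hh
      have : δ < δ ∧ π δ = j := (h4 j hj δ).2 ⟨hmem.1.trans hi.le, not_le.1 hh⟩
      exact absurd this.1 (lt_irrefl δ)
    have hβδ : β j < δ := lt_of_le_of_lt hmem.1 hi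
    have hβmem : β j < δ ∧ π (β j) = j :=
      (h4 j hj (β j)).2 ⟨le_rfl, lt_add_of_pos_right (β j) hεpos⟩
    exact ⟨hβδ, hβmem.2, hεpos, hsum⟩
  -- strict monotonicity of β on Iio η
  have hmono : ∀ j < η, ∀ k < η, j < k → β j < β k := by
    intro j hj k hk hjk
    by_contra hh
    have hle : β k ≤ β j := not_lt.1 hh
    have := h2 (β k) (hfib k hk).1 (β j) (hfib j hj).1 hle
    rw [(hfib k hk).2.1, (hfib j hj).2.1] at this
    exact absurd (hjk.trans_le this) (lt_irrefl j)
  have hmonole : ∀ j k, j ≤ k → k < η → β j ≤ β k := by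
    intro j k hjk hk
    rcases eq_or_lt_of_le hjk with rfl | hlt
    · exact le_rfl
    · exact (hmono j (hlt.trans hk) k hk hlt).le
  -- β 0 = 0
  have hβ0 : β 0 = 0 := by
    have hπ0 : π 0 = 0 := by
      have := h2 0 hδ (β 0) (hfib 0 hη).1 ((zero_le (a := (β 0))))
      rw [(hfib 0 hη).2.1] at this
      exact le_antisymm this ((zero_le (a := _)))
    have := (h4 0 hη 0).1 ⟨hδ, hπ0⟩
    exact le_antisymm this.1 ((zero_le (a := _)))
  -- membership index is monotone
  have hidx : ∀ k < η, ∀ x < δ, β k ≤ x → k ≤ π x := by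
    intro k hk x hx hβx
    by_contra hh
    have hπk : π x < k := not_le.1 hh
    have hπη : π x < η := h1 x hx
    have hmemx : β (π x) ≤ x ∧ x < β (π x) + ε (π x) := (h4 (π x) hπη x).1 ⟨hx, rfl⟩
    have hπ1 : π x + 1 ≤ k := succ_le_of_lt' hπk
    have hπ1η : π x + 1 < η := lt_of_le_of_lt hπ1 hk
    have hend : β (π x) + ε (π x) ≤ β (π x + 1) := by
      by_contra hh5
      have hmem : β (π x) ≤ β (π x + 1) ∧ β (π x + 1) < β (π x) + ε (π x) :=
        ⟨(hmono (π x) hπη (π x + 1) hπ1η (lt_add_of_pos_right (π x) one_pos)).le,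
          not_le.1 hh5⟩
      have := ((h4 (π x) hπη (β (π x + 1))).2 hmem).2
      rw [(hfib (π x + 1) hπ1η).2.1] at this
      exact absurd this.symm (ne_of_lt (lt_add_of_pos_right (π x) one_pos))
    have : β (π x) + ε (π x) ≤ x := (hend.trans (hmonole _ _ hπ1 hk)).trans hβx
    exact absurd hmemx.2 (not_lt.2 this)
  -- successor cuts
  have hsucc : ∀ j, j + 1 < η → β (j + 1) = β j + ε j := by
    intro j hj1
    have hj : j < η := (lt_add_of_pos_right j one_pos).trans hj1
    have hge : β j + ε j ≤ β (j + 1) := by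
      by_contra hh
      have hmem : β j ≤ β (j + 1) ∧ β (j + 1) < β j + ε j :=
        ⟨(hmono j hj (j + 1) hj1 (lt_add_of_pos_right j one_pos)).le, not_le.1 hh⟩
      have := ((h4 j hj (β (j + 1))).2 hmem).2
      rw [(hfib (j + 1) hj1).2.1] at this
      exact absurd this.symm (ne_of_lt (lt_add_of_pos_right j one_pos))
    have hle : β (j + 1) ≤ β j + ε j := by
      by_contra hh
      set x := β j + ε j with hx
      have hxδ : x < δ := (not_le.1 hh).trans (hfib (j + 1) hj1).1
      have hjm : j ≤ π x := hidx j hj x hxδ ((le_self_add (a := _) (b := _)))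
      have hmη : π x < η := h1 x hxδ
      have hmemx : β (π x) ≤ x ∧ x < β (π x) + ε (π x) := (h4 (π x) hmη x).1 ⟨hxδ, rfl⟩
      rcases eq_or_lt_of_le hjm with he | hlt
      · rw [← he] at hmemx
        exact absurd hmemx.2 (lt_irrefl x)
      · have hj1m : j + 1 ≤ π x := succ_le_of_lt' hlt
        have : β (j + 1) ≤ β (π x) := hmonole _ _ hj1m hmη
        exact absurd ((not_le.1 hh).trans_le (this.trans hmemx.1)) (lt_irrefl _)
    exact le_antisymm hle hge
  -- final cut
  have hlast : ∀ j₀, η = j₀ + 1 → β j₀ + ε j₀ = δ := by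
    intro j₀ hηj
    have hj₀ : j₀ < η := by rw [hηj]; exact lt_add_of_pos_right j₀ one_pos
    refine le_antisymm (hfib j₀ hj₀).2.2.2 ?_
    by_contra hh
    set x := β j₀ + ε j₀ with hx
    have hxδ : x < δ := not_le.1 hh
    have hj₀m : j₀ ≤ π x := hidx j₀ hj₀ x hxδ ((le_self_add (a := _) (b := _)))
    have hmη : π x < η := h1 x hxδ
    have hmj : π x ≤ j₀ := by
      rw [hηj, Ordinal.add_one_eq_succ, Order.lt_succ_iff] at hmη
      exact hmη
    have he : π x = j₀ := le_antisymm hmj hj₀m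
    have hmemx : β (π x) ≤ x ∧ x < β (π x) + ε (π x) := (h4 (π x) hmη x).1 ⟨hxδ, rfl⟩
    rw [he] at hmemx
    exact absurd hmemx.2 (lt_irrefl x)
  -- continuity of β below η
  have hcont : ∀ j < η, Order.IsSuccLimit j → ∀ x, (∀ k < j, β k ≤ x) → β j ≤ x := by
    intro j hj hlim x hx
    by_contra hh
    have hxβ : x < β j := not_le.1 hh
    have hxδ : x < δ := hxβ.trans (hfib j hj).1
    have hkm : ∀ k < j, k ≤ π x := fun k hk => hidx k (hk.trans hj) x hxδ (hx k hk)
    have hjm : j ≤ π x := by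
      by_contra hh2
      have hπj : π x < j := not_le.1 hh2
      have : π x + 1 < j := by
        rw [Ordinal.add_one_eq_succ]
        exact hlim.succ_lt hπj
      exact absurd (hkm _ this) (by simp)
    have hmη : π x < η := h1 x hxδ
    have hmemx : β (π x) ≤ x ∧ x < β (π x) + ε (π x) := (h4 (π x) hmη x).1 ⟨hxδ, rfl⟩
    exact absurd ((hmonole _ _ hjm hmη).trans hmemx.1) (not_le.2 hxβ)
  -- continuity at η when η is a limit
  have hcontη : Order.IsSuccLimit η → ∀ x, (∀ k < η, β k ≤ x) → δ ≤ x := by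
    intro hlim x hx
    by_contra hh
    have hxδ : x < δ := not_le.1 hh
    have hmη : π x < η := h1 x hxδ
    have hm1η : π x + 1 < η := by
      rw [Ordinal.add_one_eq_succ]; exact hlim.succ_lt hmη
    have hmemx : β (π x) ≤ x ∧ x < β (π x) + ε (π x) := (h4 (π x) hmη x).1 ⟨hxδ, rfl⟩
    rw [← hsucc _ hm1η] at hmemx
    exact absurd (hmemx.2.trans_le (hx _ hm1η)) (lt_irrefl x)
  -- assemble the tiling
  have T : IsTiling δ η (fun j => if j = η then δ else β j) := by
    refine ⟨?_, ?_, ?_, ?_⟩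
    · rw [if_neg (ne_of_lt hη), hβ0]
    · rw [if_pos rfl]
    · intro j hj k hk hjk
      rcases eq_or_lt_of_le hk with rfl | hkη
      · simp only [if_pos rfl, if_neg (ne_of_lt hjk)]
        exact (hfib j hjk).1
      · simp only [if_neg (ne_of_lt (hjk.trans hkη)), if_neg (ne_of_lt hkη)]
        exact hmono j (hjk.trans hkη) k hkη hjk
    · intro j hj hlim x hx
      rcases eq_or_lt_of_le hj with rfl | hjη
      · simp only [if_pos rfl]
        apply hcontη hlim x
        intro k hk
        have := hx k hk
        rwa [if_neg (ne_of_lt hk)] at this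
      · simp only [if_neg (ne_of_lt hjη)]
        apply hcont j hjη hlim x
        intro k hk
        have := hx k hk
        rwa [if_neg (ne_of_lt (hk.trans hjη))] at this
  refine ⟨hη, T, ?_, ?_, fun j hj => (hfib j hj).2.2.2⟩
  · intro j hj
    rw [if_neg (ne_of_lt hj)]
    rcases eq_or_lt_of_le (succ_le_of_lt' hj) with he | hlt
    · rw [if_pos he, ← hlast j he.symm, Ordinal.add_sub_cancel]
    · rw [if_neg (ne_of_lt hlt), hsucc j hlt, Ordinal.add_sub_cancel]
  · have := T.le_self η le_rfl
    rwa [if_pos rfl] at this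

theorem option_eq_some_getD {S : Type u} {o : Option S} (h : o.isSome) (d : S) :
    o = some (o.getD d) := by
  cases o with
  | none => simp at h
  | some v => rfl

variable {S : Type u}

/-- The sequence of products of the pieces of a tiling. -/
noncomputable def pieceSeq (P : PartialOrdinalSemigroup S) (c : Ordinal.{u} → Ordinal.{u})
    (a : Ordinal.{u} → S) : Ordinal.{u} → S :=
  fun j => (P.prod (c (j + 1) - c j) (fun γ => a (c j + γ))).getD (a 0)

theorem ord_tiling (P : PartialOrdinalSemigroup S) {δ η : Ordinal.{u}}
    {c : Ordinal.{u} → Ordinal.{u}} (T : IsTiling δ η c) (hη : 0 < η)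
    {a : Ordinal.{u} → S} {s : S} (hs : P.prod δ a = some s) :
    ∃ b : Ordinal.{u} → S,
      (∀ j < η, P.prod (c (j + 1) - c j) (fun γ => a (c j + γ)) = some (b j)) ∧
      P.prod η b = some s :=
  P.ord δ η a (piT c) c (fun j => c (j + 1) - c j) s (toDecomp T hη) hs

/-- products over the pieces of a tiling of `μ.ord` whose index is a limit are defined. -/
theorem pieces_def {μ : Cardinal.{u}} (P : PartialOrdinalSemigroup S)
    (hP : DomExactly P (fun δ => 0 < δ ∧ δ < μ.ord)) {η : Ordinal.{u}}
    {c : Ordinal.{u} → Ordinal.{u}} (T : IsTiling μ.ord η c) (hlim : Order.IsSuccLimit η)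
    (a : Ordinal.{u} → S) :
    ∀ j < η, P.prod (c (j + 1) - c j) (fun γ => a (c j + γ)) = some (pieceSeq P c a j) := by
  intro j hj
  have hj1 : j + 1 < η := by
    rw [Ordinal.add_one_eq_succ]; exact hlim.succ_lt hj
  have hsmall : c (j + 1) - c j < μ.ord :=
    lt_of_le_of_lt (Ordinal.sub_le_self _ _) (T.lt_top hj1)
  have hd : (P.prod (c (j + 1) - c j) (fun γ => a (c j + γ))).isSome :=
    (hP _ _).2 ⟨T.piece_pos hj, hsmall⟩
  exact option_eq_some_getD hd _

/-- Grouping lemma: the product over a composite piece equals the product of the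
corresponding block of piece-products. -/
theorem group_pieces (P : PartialOrdinalSemigroup S) {δ θ η : Ordinal.{u}}
    {c e : Ordinal.{u} → Ordinal.{u}} (Tc : IsTiling δ θ c) (Te : IsTiling θ η e)
    {a b : Ordinal.{u} → S}
    (hb : ∀ t < θ, P.prod (c (t + 1) - c t) (fun γ => a (c t + γ)) = some (b t))
    {j : Ordinal.{u}} (hj : j < η) {sj : S}
    (hsj : P.prod (c (e (j + 1)) - c (e j)) (fun γ => a (c (e j) + γ)) = some sj) :
    P.prod (e (j + 1) - e j) (fun t => b (e j + t)) = some sj := by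
  have hj1 : j + 1 ≤ η := succ_le_of_lt' hj
  have hee : e j < e (j + 1) := Te.mono hj.le hj1 (lt_add_of_pos_right j one_pos)
  have he1 : e (j + 1) ≤ θ := Te.le_top' hj1
  have T' := subTiling Tc hee he1
  have hη' : 0 < e (j + 1) - e j := pos_sub_of_lt hee
  obtain ⟨b', hb', hb'top⟩ := ord_tiling P T' hη' hsj
  have hbb : ∀ t < e (j + 1) - e j, b (e j + t) = b' t := by
    intro t ht
    have haux : e j + t < θ := by
      have : e j + t < e j + (e (j + 1) - e j) := add_lt_add_right ht (e j)
      rw [Ordinal.add_sub_cancel_of_le hee.le] at this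
      exact this.trans_le he1
    have h2 := hb' t ht
    -- rewrite the inner product data
    have ht1 : e j + (t + 1) ≤ e (j + 1) := by
      have h3 : t + 1 ≤ e (j + 1) - e j := succ_le_of_lt' ht
      have := add_le_add_right h3 (e j)
      rwa [Ordinal.add_sub_cancel_of_le hee.le] at this
    have hle1 : c (e j) ≤ c (e j + t) :=
      Tc.mono_le ((le_self_add (a := _) (b := _))) haux.le
    have hle2 : c (e j + t) ≤ c (e j + t + 1) :=
      Tc.mono_le ((le_self_add (a := _) (b := _))) (by rw [add_assoc]; exact ht1.trans he1)
    have hkey1 : c (e j + (t + 1)) - c (e j) - (c (e j + t) - c (e j))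
        = c (e j + t + 1) - c (e j + t) := by
      rw [← add_assoc]
      exact sub_sub_cancel hle1 hle2
    have hkey2 : (fun γ => a (c (e j) + (c (e j + t) - c (e j) + γ)))
        = fun γ => a (c (e j + t) + γ) := by
      funext γ
      rw [← add_assoc, Ordinal.add_sub_cancel_of_le hle1]
    rw [hkey1, hkey2] at h2
    have h1 := hb (e j + t) haux
    rw [h1] at h2
    exact Option.some.inj h2
  calc P.prod (e (j + 1) - e j) (fun t => b (e j + t))
      = P.prod (e (j + 1) - e j) b' := P.congr _ _ _ hbb
    _ = some sj := hb'top

theorem sSup_image_mem {δ η : Ordinal.{u}} {c : Ordinal.{u} → Ordinal.{u}}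
    (T : IsTiling δ η c) {D : Set Ordinal.{u}} (hD : D ⊆ c '' Set.Iic η)
    (hne : D.Nonempty) : sSup D ∈ c '' Set.Iic η := by
  classical
  set Ts : Set Ordinal.{u} := {j | j ≤ η ∧ c j ∈ D} with hTs
  have hTne : Ts.Nonempty := by
    obtain ⟨d, hd⟩ := hne
    obtain ⟨j, hj, rfl⟩ := hD hd
    exact ⟨j, hj, hd⟩
  have hTbdd : BddAbove Ts := ⟨η, fun j hj => hj.1⟩
  set j0 := sSup Ts with hj0
  have hj0η : j0 ≤ η := csSup_le hTne fun j hj => hj.1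
  have hub : ∀ d ∈ D, d ≤ c j0 := by
    intro d hd
    obtain ⟨j, hj, rfl⟩ := hD hd
    exact T.mono_le (le_csSup hTbdd ⟨hj, hd⟩) hj0η
  have hDbdd : BddAbove D := ⟨c j0, hub⟩
  have hle : c j0 ≤ sSup D := by
    by_cases hmem : j0 ∈ Ts
    · exact le_csSup hDbdd hmem.2
    · have hlim : Order.IsSuccLimit j0 := by
        rcases SingExtAux.zero_or_succ_or_limit' j0 with h0 | ⟨m, hm⟩ | h
        · exfalso
          obtain ⟨j, hj⟩ := hTne
          have hjle : j ≤ j0 := le_csSup hTbdd hj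
          rw [h0] at hjle
          have hj0' : j = 0 := le_antisymm hjle ((zero_le (a := j)))
          rw [hj0'] at hj
          rw [h0] at hmem
          exact hmem hj
        · exfalso
          have hbd : ∀ j ∈ Ts, j ≤ m := by
            intro j hj
            have hjle : j ≤ j0 := le_csSup hTbdd hj
            rcases eq_or_lt_of_le hjle with rfl | hlt
            · exact absurd hj hmem
            · rw [hm] at hlt
              exact Order.lt_succ_iff.1 hlt
          have := csSup_le hTne hbd
          rw [← hj0, hm] at this
          exact absurd this (Order.lt_succ m).not_ge
        · exact h
      apply T.cont hj0η hlim
      intro k hk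
      obtain ⟨j, hj, hkj⟩ : ∃ j ∈ Ts, k < j := by
        by_contra hh
        push_neg at hh
        exact absurd (csSup_le hTne hh) (not_le.2 hk)
      exact (T.mono_le hkj.le hj.1).trans (le_csSup hDbdd hj.2)
  exact ⟨j0, hj0η, le_antisymm hle (csSup_le hne hub)⟩

theorem indep {μ : Cardinal.{u}} (hμ : ℵ₀ ≤ μ) (P : PartialOrdinalSemigroup S)
    (hP : DomExactly P (fun δ => 0 < δ ∧ δ < μ.ord))
    {η1 η2 : Ordinal.{u}} {c1 c2 : Ordinal.{u} → Ordinal.{u}}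
    (T1 : IsTiling μ.ord η1 c1) (h1lim : Order.IsSuccLimit η1) (h1lt : η1 < μ.ord)
    (T2 : IsTiling μ.ord η2 c2) (h2lim : Order.IsSuccLimit η2) (h2lt : η2 < μ.ord)
    (a : Ordinal.{u} → S) :
    P.prod η1 (pieceSeq P c1 a) = P.prod η2 (pieceSeq P c2 a) := by
  classical
  have hμlim : Order.IsSuccLimit μ.ord := Cardinal.isSuccLimit_ord hμ
  set A1 := c1 '' Set.Iic η1 with hA1
  set A2 := c2 '' Set.Iic η2 with hA2
  set C : Set Ordinal.{u} := A1 ∪ A2 ∪ Set.Ici μ.ord with hC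
  have hA1C : A1 ⊆ C := fun x hx => Or.inl (Or.inl hx)
  have hA2C : A2 ⊆ C := fun x hx => Or.inl (Or.inr hx)
  have hCub : ¬ BddAbove C := by
    rintro ⟨x, hx⟩
    have h1 : max x μ.ord + 1 ∈ C :=
      Or.inr (Set.mem_Ici.2 (le_trans (le_max_right x μ.ord) ((le_self_add (a := _) (b := 1)))))
    have h2 : x < max x μ.ord + 1 :=
      lt_of_le_of_lt (le_max_left _ _) (lt_add_of_pos_right _ one_pos)
    exact absurd (hx h1) (not_le.2 h2)
  set E := Ordinal.enumOrd C with hE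
  have hEmono : StrictMono E := Ordinal.enumOrd_strictMono hCub
  have hrange : Set.range E = C := Ordinal.range_enumOrd hCub
  have hinv : ∀ y ∈ C, ∃ t, E t = y := by
    intro y hy
    rw [← hrange] at hy
    exact hy
  set invE : Ordinal.{u} → Ordinal.{u} := fun y => sInf {t | E t = y} with hinvE
  have hinv_spec : ∀ y ∈ C, E (invE y) = y := by
    intro y hy
    obtain ⟨t, ht⟩ := hinv y hy
    have h1 : invE y ∈ {t | E t = y} := csInf_mem ⟨t, ht⟩
    exact h1
  have hμC : μ.ord ∈ C := Or.inr (Set.mem_Ici.2 le_rfl)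
  have h0C : (0 : Ordinal.{u}) ∈ C :=
    hA1C ⟨0, Set.mem_Iic.2 ((zero_le (a := η1))), T1.zero⟩
  set θ := invE μ.ord with hθ
  have hEθ : E θ = μ.ord := hinv_spec _ hμC
  have hE0 : E 0 = 0 := by
    refine le_antisymm (Ordinal.enumOrd_le_of_forall_lt h0C ?_) ((zero_le (a := _)))
    intro b hb
    exact absurd hb ((not_lt_zero (a := b)))
  have hθpos : 0 < θ := by
    have h1 : E 0 < E θ := by rw [hE0, hEθ]; exact hμlim.pos
    exact hEmono.lt_iff_lt.1 h1
  have hmemA : ∀ t < θ, E t ∈ A1 ∪ A2 := by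
    intro t ht
    have h1 : E t ∈ C := Ordinal.enumOrd_mem hCub t
    have h2 : E t < μ.ord := by rw [← hEθ]; exact hEmono ht
    rcases h1 with h | h
    · exact h
    · exact absurd h2 (not_lt.2 h)
  have TE : IsTiling μ.ord θ E := by
    refine ⟨hE0, hEθ, fun j _ k _ h => hEmono h, ?_⟩
    intro t htθ hlim x hx
    set D := E '' Set.Iio t with hD
    have hDne : D.Nonempty := ⟨E 0, 0, hlim.pos, rfl⟩
    have hDub : ∀ d ∈ D, d ≤ x := by rintro d ⟨k, hk, rfl⟩; exact hx k hk
    have hDbdd : BddAbove D := ⟨x, hDub⟩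
    have hsx : sSup D ≤ x := csSup_le hDne hDub
    have hsub : D ⊆ A1 ∪ A2 := by
      rintro d ⟨k, hk, rfl⟩
      exact hmemA k (hk.trans_le htθ)
    have hDC : sSup D ∈ A1 ∪ A2 := by
      set D1 := D ∩ A1 with hD1
      set D2 := D ∩ A2 with hD2
      have hD12 : D = D1 ∪ D2 := by
        rw [hD1, hD2, ← Set.inter_union_distrib_left]
        exact (Set.inter_eq_left.2 hsub).symm
      by_cases hne1 : D1.Nonempty
      · by_cases hne2 : D2.Nonempty
        · have hbdd1 : BddAbove D1 := hDbdd.mono Set.inter_subset_left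
          have hbdd2 : BddAbove D2 := hDbdd.mono Set.inter_subset_left
          have h1 : sSup D1 ∈ A1 :=
            sSup_image_mem T1 (show D1 ⊆ c1 '' Set.Iic η1 from Set.inter_subset_right) hne1
          have h2 : sSup D2 ∈ A2 :=
            sSup_image_mem T2 (show D2 ⊆ c2 '' Set.Iic η2 from Set.inter_subset_right) hne2
          have : sSup D = sSup D1 ⊔ sSup D2 := by
            rw [hD12]
            exact csSup_union hbdd1 hne1 hbdd2 hne2
          rw [this]
          rcases le_total (sSup D1) (sSup D2) with hle | hle
          · rw [sup_eq_right.2 hle]; exact Or.inr h2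
          · rw [sup_eq_left.2 hle]; exact Or.inl h1
        · have hD2e : D2 = ∅ := Set.not_nonempty_iff_eq_empty.1 hne2
          have hDeq : D = D1 := by rw [hD12, hD2e, Set.union_empty]
          rw [hDeq]
          exact Or.inl (sSup_image_mem T1
            (show D1 ⊆ c1 '' Set.Iic η1 from Set.inter_subset_right) hne1)
      · have hD1e : D1 = ∅ := Set.not_nonempty_iff_eq_empty.1 hne1
        have hDeq : D = D2 := by rw [hD12, hD1e, Set.empty_union]
        have hne2 : D2.Nonempty := hDeq ▸ hDne
        rw [hDeq]
        exact Or.inr (sSup_image_mem T2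
          (show D2 ⊆ c2 '' Set.Iic η2 from Set.inter_subset_right) hne2)
    obtain ⟨v, hv⟩ := hinv (sSup D) (Or.inl hDC)
    have htv : t ≤ v := by
      by_contra hh
      have hvt : v < t := not_le.1 hh
      have hv1 : v + 1 < t := by
        rw [Ordinal.add_one_eq_succ]; exact hlim.succ_lt hvt
      have hEv1 : E (v + 1) ≤ sSup D := le_csSup hDbdd ⟨v + 1, hv1, rfl⟩
      rw [← hv] at hEv1
      have := hEmono.le_iff_le.1 hEv1
      exact absurd this (by simp)
    have : E t ≤ E v := hEmono.monotone htv
    rw [hv] at this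
    exact this.trans hsx
  -- θ is small
  have hθlt : θ < μ.ord := by
    rw [Cardinal.lt_ord]
    have hinj : Function.Injective
        (fun t : Set.Iio θ => (⟨E t.1, hmemA t.1 t.2⟩ : (A1 ∪ A2 : Set Ordinal.{u}))) := by
      intro x y hxy
      apply Subtype.ext
      exact hEmono.injective (congrArg Subtype.val hxy)
    have h1 : #(Set.Iio θ) ≤ #(A1 ∪ A2 : Set Ordinal.{u}) := Cardinal.mk_le_of_injective hinj
    have h2 : #(A1 ∪ A2 : Set Ordinal.{u}) ≤ #A1 + #A2 := Cardinal.mk_union_le _ _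
    have h3 : #A1 ≤ #(Set.Iic η1) := Cardinal.mk_image_le
    have h4 : #A2 ≤ #(Set.Iic η2) := Cardinal.mk_image_le
    have h5 : #(Set.Iic η1) = Cardinal.lift.{u + 1} (η1 + 1).card := by
      rw [← Ordinal.mk_Iio_ordinal, Ordinal.add_one_eq_succ, Order.Iio_succ]
    have h6 : #(Set.Iic η2) = Cardinal.lift.{u + 1} (η2 + 1).card := by
      rw [← Ordinal.mk_Iio_ordinal, Ordinal.add_one_eq_succ, Order.Iio_succ]
    have h7 : Cardinal.lift.{u + 1} θ.card ≤
        Cardinal.lift.{u + 1} ((η1 + 1).card + (η2 + 1).card) := by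
      rw [Cardinal.lift_add]
      rw [← Ordinal.mk_Iio_ordinal]
      exact h1.trans (h2.trans (add_le_add (h3.trans_eq h5) (h4.trans_eq h6)))
    have h8 : θ.card ≤ (η1 + 1).card + (η2 + 1).card := Cardinal.lift_le.1 h7
    have h9 : (η1 + 1).card < μ := by
      rw [← Cardinal.lt_ord]
      rw [Ordinal.add_one_eq_succ]
      exact hμlim.succ_lt h1lt
    have h10 : (η2 + 1).card < μ := by
      rw [← Cardinal.lt_ord]
      rw [Ordinal.add_one_eq_succ]
      exact hμlim.succ_lt h2lt
    exact lt_of_le_of_lt h8 (Cardinal.add_lt_of_lt hμ h9 h10)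
  -- θ is a limit
  have hθlim : Order.IsSuccLimit θ := by
    rcases SingExtAux.zero_or_succ_or_limit' θ with h0 | ⟨v, hv⟩ | h
    · exact absurd h0.symm hθpos.ne
    · exfalso
      rw [← Ordinal.add_one_eq_succ] at hv
      have hvθ : v < θ := by rw [hv]; exact lt_add_of_pos_right v one_pos
      have hEv : E v < μ.ord := by rw [← hEθ]; exact hEmono hvθ
      obtain ⟨k, hkη, hEvk⟩ : ∃ k < η1, E v < c1 k := by
        by_contra hh
        push_neg at hh
        have := T1.cont le_rfl h1lim (E v) hh
        rw [T1.top] at this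
        exact absurd hEv (not_lt.2 this)
      have hkC : c1 k ∈ C := hA1C ⟨k, hkη.le, rfl⟩
      obtain ⟨w, hw⟩ := hinv (c1 k) hkC
      have hwθ : w < θ := by
        have h1 : E w < E θ := by rw [hw, hEθ]; exact T1.lt_top hkη
        exact hEmono.lt_iff_lt.1 h1
      have hwv : w ≤ v := by
        rw [hv, Ordinal.add_one_eq_succ, Order.lt_succ_iff] at hwθ
        exact hwθ
      have h1 : E w ≤ E v := hEmono.monotone hwv
      rw [hw] at h1
      exact absurd hEvk (not_lt.2 h1)
    · exact h
  -- piece products along E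
  have hb := pieces_def P hP TE hθlim a
  have hbdef : (P.prod θ (pieceSeq P E a)).isSome := (hP _ _).2 ⟨hθpos, hθlt⟩
  obtain ⟨s0, hs0⟩ : ∃ s0, P.prod θ (pieceSeq P E a) = some s0 :=
    Option.isSome_iff_exists.1 hbdef
  have main : ∀ (η : Ordinal.{u}) (c : Ordinal.{u} → Ordinal.{u}),
      IsTiling μ.ord η c → Order.IsSuccLimit η → (c '' Set.Iic η ⊆ C) →
      P.prod η (pieceSeq P c a) = some s0 := by
    intro η c T hlim hsub
    set e : Ordinal.{u} → Ordinal.{u} := fun j => invE (c j) with he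
    have heE : ∀ j ≤ η, E (e j) = c j := fun j hj => hinv_spec _ (hsub ⟨j, hj, rfl⟩)
    have Te : IsTiling θ η e := by
      refine ⟨?_, ?_, ?_, ?_⟩
      · have h1 : E (e 0) = E 0 := by rw [heE 0 ((zero_le (a := η))), T.zero, hE0]
        exact hEmono.injective h1
      · have h1 : E (e η) = E θ := by rw [heE η le_rfl, T.top, hEθ]
        exact hEmono.injective h1
      · intro j hj k hk hjk
        have h1 : E (e j) < E (e k) := by
          rw [heE j hj, heE k hk]; exact T.mono hj hk hjk
        exact hEmono.lt_iff_lt.1 h1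
      · intro j hj hjlim x hx
        by_contra hh
        have hxe : x < e j := not_le.1 hh
        have h1 : E x < c j := by rw [← heE j hj]; exact hEmono hxe
        have h2 : c j ≤ E x := by
          apply T.cont hj hjlim
          intro k hk
          have h3 : E (e k) ≤ E x := hEmono.monotone (hx k hk)
          rwa [heE k (hk.le.trans hj)] at h3
        exact absurd h1 (not_lt.2 h2)
    obtain ⟨B, hB, hBtop⟩ := ord_tiling P Te hlim.pos hs0
    have hBj : ∀ j < η, B j = pieceSeq P c a j := by
      intro j hj
      have hps := pieces_def P hP T hlim a j hj
      have hsj : P.prod (E (e (j + 1)) - E (e j)) (fun γ => a (E (e j) + γ))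
          = some (pieceSeq P c a j) := by
        rw [heE j hj.le, heE (j + 1) (succ_le_of_lt' hj)]
        exact hps
      have hgp := group_pieces P TE Te hb hj hsj
      exact Option.some.inj ((hB j hj).symm.trans hgp)
    calc P.prod η (pieceSeq P c a) = P.prod η B :=
          P.congr _ _ _ (fun j hj => (hBj j hj).symm)
      _ = some s0 := hBtop
  rw [main η1 c1 T1 h1lim hA1C, main η2 c2 T2 h2lim hA2C]

theorem absorb {μ : Cardinal.{u}} (hμ : ℵ₀ ≤ μ) {a : Ordinal.{u}} (ha : a < μ.ord) :
    a + μ.ord = μ.ord := by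
  refine le_antisymm ?_ ((le_add_self (a := _) (b := _)))
  rw [Ordinal.add_le_iff_of_isSuccLimit (Cardinal.isSuccLimit_ord hμ)]
  intro b hb
  exact (Ordinal.isPrincipal_add_ord hμ ha hb).le

/-- A base tiling of `μ.ord` indexed by `μ.ord.cof.ord`. -/
theorem exists_base_tiling (μ : Cardinal.{u}) (hμ : ℵ₀ ≤ μ) :
    ∃ c : Ordinal.{u} → Ordinal.{u}, IsTiling μ.ord μ.ord.cof.ord c := by
  classical
  set κ := μ.ord.cof.ord with hκ
  obtain ⟨f, hf⟩ := Ordinal.exists_fundamental_sequence μ.ord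
  have hκlim : Order.IsSuccLimit κ :=
    Cardinal.isSuccLimit_ord (Ordinal.aleph0_le_cof.2 (Cardinal.isSuccLimit_ord hμ))
  set F : Ordinal.{u} → Ordinal.{u} := fun k => if h : k < κ then f k h else 0 with hF
  have hFf : (fun k (hk : k < κ) => F k) = f := by
    funext k hk
    simp only [hF, dif_pos hk]
  have hblsub : Ordinal.blsub κ (fun k _ => F k) = μ.ord := by
    rw [hFf]; exact hf.blsub_eq
  have hFmono : ∀ k < κ, ∀ k' < κ, k < k' → F k < F k' := by
    intro k hk k' hk' hkk
    simp only [hF, dif_pos hk, dif_pos hk']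
    exact hf.2.1 hk hk' hkk
  have hFlt : ∀ k < κ, F k < μ.ord := by
    intro k hk
    rw [← hblsub]
    exact Ordinal.lt_blsub _ k hk
  set c : Ordinal.{u} → Ordinal.{u} :=
    fun j => if κ ≤ j then μ.ord else Ordinal.blsub j (fun k _ => F k) with hc
  have hcj : ∀ j < κ, c j = Ordinal.blsub j (fun k _ => F k) := by
    intro j hj
    simp only [hc, if_neg (not_le.2 hj)]
  have hcF : ∀ j < κ, c j ≤ F j := by
    intro j hj
    rw [hcj j hj]
    exact Ordinal.blsub_le fun i hi => hFmono i (hi.trans hj) j hj hi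
  have hclt : ∀ j < κ, c j < μ.ord := fun j hj => (hcF j hj).trans_lt (hFlt j hj)
  refine ⟨c, ?_, ?_, ?_, ?_⟩
  · rw [hcj 0 hκlim.pos]
    exact Ordinal.blsub_zero _
  · simp only [hc, if_pos le_rfl]
  · intro j hj k hk hjk
    rcases eq_or_lt_of_le hk with rfl | hkκ
    · simp only [hc, if_pos le_rfl]
      exact hclt j hjk
    · have hjκ : j < κ := hjk.trans hkκ
      rw [hcj j hjκ, hcj k hkκ]
      calc Ordinal.blsub j (fun k _ => F k) ≤ F j := by
            rw [← hcj j hjκ]; exact hcF j hjκ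
        _ < Ordinal.blsub k (fun k _ => F k) := Ordinal.lt_blsub _ j hjk
  · intro j hj hlim x hx
    have key : ∀ i < j, F i < x := by
      intro i hi
      have hi1 : i + 1 < j := by
        rw [Ordinal.add_one_eq_succ]; exact hlim.succ_lt hi
      have hi1κ : i + 1 < κ := hi1.trans_le hj
      have h1 : F i < c (i + 1) := by
        rw [hcj _ hi1κ]
        exact Ordinal.lt_blsub _ i (lt_add_of_pos_right i one_pos)
      exact h1.trans_le (hx _ hi1)
    rcases eq_or_lt_of_le hj with rfl | hjκ
    · simp only [hc, if_pos le_rfl]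
      rw [← hblsub]
      exact Ordinal.blsub_le key
    · rw [hcj j hjκ]
      exact Ordinal.blsub_le fun i hi => key i hi

variable {S : Type u}

/-- In any extension, the product of a `μ.ord`-indexed sequence is computed by any
limit tiling of `μ.ord` with small index. -/
theorem value_forced {μ : Cardinal.{u}} (hμ : ℵ₀ ≤ μ) (P Q : PartialOrdinalSemigroup S)
    (hP : DomExactly P (fun δ => 0 < δ ∧ δ < μ.ord))
    (hQdom : DomExactly Q (fun δ => 0 < δ ∧ δ ≤ μ.ord)) (hQext : Extends Q P)
    {η : Ordinal.{u}} {c : Ordinal.{u} → Ordinal.{u}} (T : IsTiling μ.ord η c)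
    (hlim : Order.IsSuccLimit η) (hlt : η < μ.ord) (a : Ordinal.{u} → S) (s : S)
    (hs : Q.prod μ.ord a = some s) :
    (∀ j < η, P.prod (c (j + 1) - c j) (fun γ => a (c j + γ)) = some (pieceSeq P c a j)) ∧
      P.prod η (pieceSeq P c a) = some s := by
  have hps := pieces_def P hP T hlim a
  refine ⟨hps, ?_⟩
  obtain ⟨b, hbj, hbtop⟩ := Q.ord μ.ord η a (piT c) c (fun j => c (j + 1) - c j) s
    (toDecomp T hlim.pos) hs
  have hbeq : ∀ j < η, b j = pieceSeq P c a j := by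
    intro j hj
    have h1 : Q.prod (c (j + 1) - c j) (fun γ => a (c j + γ)) = some (pieceSeq P c a j) :=
      hQext _ _ _ (hps j hj)
    exact Option.some.inj ((hbj j hj).symm.trans h1)
  have hPb : (P.prod η b).isSome := (hP _ _).2 ⟨hlim.pos, hlt⟩
  obtain ⟨s', hs'⟩ : ∃ s', P.prod η b = some s' := Option.isSome_iff_exists.1 hPb
  have h2 : Q.prod η b = some s' := hQext _ _ _ hs'
  have h3 : s' = s := Option.some.inj (h2.symm.trans hbtop)
  calc P.prod η (pieceSeq P c a) = P.prod η b := P.congr _ _ _ fun j hj => (hbeq j hj).symm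
    _ = some s := by rw [hs', h3]

theorem pieceSeq_congr (P : PartialOrdinalSemigroup S) {δ η : Ordinal.{u}}
    {c : Ordinal.{u} → Ordinal.{u}} (T : IsTiling δ η c) (hδ : 0 < δ)
    {a b : Ordinal.{u} → S} (hab : ∀ i < δ, a i = b i) :
    ∀ j < η, pieceSeq P c a j = pieceSeq P c b j := by
  intro j hj
  have hj1 : j + 1 ≤ η := succ_le_of_lt' hj
  have hcc : c j + (c (j + 1) - c j) = c (j + 1) :=
    Ordinal.add_sub_cancel_of_le (T.mono_le ((le_self_add (a := j) (b := 1))) hj1)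
  have h1 : P.prod (c (j + 1) - c j) (fun γ => a (c j + γ))
      = P.prod (c (j + 1) - c j) (fun γ => b (c j + γ)) := by
    apply P.congr
    intro γ hγ
    apply hab
    have h2 : c j + γ < c (j + 1) := by rw [← hcc]; exact add_lt_add_right hγ _
    exact h2.trans_le (T.le_top' hj1)
  simp only [pieceSeq, h1, hab 0 hδ]

theorem exists_ext {μ : Cardinal.{u}} (hμ : ℵ₀ ≤ μ) (P : PartialOrdinalSemigroup S)
    (hP : DomExactly P (fun δ => 0 < δ ∧ δ < μ.ord)) {κ : Ordinal.{u}}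
    {cs : Ordinal.{u} → Ordinal.{u}} (Tcs : IsTiling μ.ord κ cs)
    (hκlim : Order.IsSuccLimit κ) (hκlt : κ < μ.ord) :
    ∃ Q : PartialOrdinalSemigroup S,
      (∀ a, Q.prod μ.ord a = P.prod κ (pieceSeq P cs a)) ∧
      DomExactly Q (fun δ => 0 < δ ∧ δ ≤ μ.ord) ∧ Extends Q P := by
  classical
  have hμlim : Order.IsSuccLimit μ.ord := Cardinal.isSuccLimit_ord hμ
  set Qf : Ordinal.{u} → (Ordinal.{u} → S) → Option S :=
    fun δ a => if δ = μ.ord then P.prod κ (pieceSeq P cs a) else P.prod δ a with hQf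
  have hQfμ : ∀ a, Qf μ.ord a = P.prod κ (pieceSeq P cs a) := fun a => if_pos rfl
  have hQfne : ∀ δ, δ ≠ μ.ord → ∀ a, Qf δ a = P.prod δ a := fun δ h a => if_neg h
  have hcongr : ∀ δ a b, (∀ i < δ, a i = b i) → Qf δ a = Qf δ b := by
    intro δ a b hab
    by_cases hδ : δ = μ.ord
    · subst hδ
      rw [hQfμ, hQfμ]
      exact P.congr _ _ _ (pieceSeq_congr P Tcs hμlim.pos hab)
    · rw [hQfne δ hδ, hQfne δ hδ]
      exact P.congr _ _ _ hab
  have hone : (1 : Ordinal.{u}) ≠ μ.ord := by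
    have h1 : (1 : Ordinal.{u}) < μ.ord := by
      rw [Cardinal.lt_ord, Ordinal.card_one]
      exact lt_of_lt_of_le Cardinal.one_lt_aleph0 hμ
    exact h1.ne
  have hunary : ∀ a : Ordinal.{u} → S, Qf 1 a = some (a 0) := by
    intro a
    rw [hQfne 1 hone]
    exact P.unary a
  have hord : ∀ δ η (a : Ordinal.{u} → S) (π β ε : Ordinal.{u} → Ordinal.{u}) (s : S),
      IsFiberDecomp δ η π β ε → Qf δ a = some s →
      ∃ b : Ordinal.{u} → S,
        (∀ j < η, Qf (ε j) (fun γ => a (β j + γ)) = some (b j)) ∧ Qf η b = some s := by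
    intro δ η a π β ε s hdec hs
    by_cases hδμ : δ = μ.ord
    case neg =>
      rw [hQfne δ hδμ] at hs
      have hdom : 0 < δ ∧ δ < μ.ord := (hP δ a).1 (by rw [hs]; rfl)
      obtain ⟨hη0, T, hpe, hηδ, hβε⟩ := decomp_facts hdec hdom.1
      obtain ⟨b, hb, htop⟩ := P.ord δ η a π β ε s hdec hs
      refine ⟨b, fun j hj => ?_, ?_⟩
      · have hεle : ε j < μ.ord :=
          lt_of_le_of_lt (((le_add_self (a := (ε j)) (b := (β j)))).trans (hβε j hj)) hdom.2
        rw [hQfne (ε j) hεle.ne]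
        exact hb j hj
      · rw [hQfne η (lt_of_le_of_lt hηδ hdom.2).ne]
        exact htop
    case pos =>
    subst hδμ
    rw [hQfμ] at hs
    obtain ⟨hη0, T, hpe, hηδ, hβε⟩ := decomp_facts hdec hμlim.pos
    have hcβ : ∀ j < η, (if j = η then μ.ord else β j) = β j :=
      fun j hj => if_neg (ne_of_lt hj)
    rcases SingExtAux.zero_or_succ_or_limit' η with h0 | ⟨j₀, hj₀⟩ | hηlim
    · exact absurd h0 hη0.ne'
    · -- successor case
      rw [← Ordinal.add_one_eq_succ] at hj₀
      subst hj₀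
      have hj₀η : j₀ < j₀ + 1 := lt_add_of_pos_right j₀ one_pos
      have hβj₀ : β j₀ < μ.ord := by
        have h1 := T.lt_top hj₀η
        rwa [hcβ j₀ hj₀η] at h1
      have hj₀μ : j₀ < μ.ord := hj₀η.trans_le hηδ
      have hεeq : ε j₀ = μ.ord - β j₀ := by
        have h1 := hpe j₀ hj₀η
        rw [if_pos rfl, hcβ j₀ hj₀η] at h1
        exact h1.symm
      have hlasteq : β j₀ + ε j₀ = μ.ord := by
        rw [hεeq, Ordinal.add_sub_cancel_of_le hβj₀.le]
      have hεj₀ : ε j₀ = μ.ord := by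
        by_contra hne
        have hεle : ε j₀ ≤ μ.ord := ((le_add_self (a := (ε j₀)) (b := (β j₀)))).trans hlasteq.le
        have hεlt : ε j₀ < μ.ord := lt_of_le_of_ne hεle hne
        have hcon : β j₀ + ε j₀ < μ.ord := Ordinal.isPrincipal_add_ord hμ hβj₀ hεlt
        rw [hlasteq] at hcon
        exact absurd hcon (lt_irrefl _)
      -- the refined tiling
      set ch : Ordinal.{u} → Ordinal.{u} :=
        fun t => if t < j₀ then β t else β j₀ + cs (t - j₀) with hch
      have hch_lo : ∀ t < j₀, ch t = β t := fun t ht => if_pos ht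
      have hch_hi : ∀ t, j₀ ≤ t → ch t = β j₀ + cs (t - j₀) :=
        fun t ht => if_neg (not_lt.2 ht)
      have hch_j₀ : ch j₀ = β j₀ := by
        rw [hch_hi j₀ le_rfl, Ordinal.sub_self, Tcs.zero, add_zero]
      have hch_eq_c : ∀ t ≤ j₀, ch t = (if t = j₀ + 1 then μ.ord else β t) := by
        intro t ht
        have htη : t ≠ j₀ + 1 := (ht.trans_lt hj₀η).ne
        rw [if_neg htη]
        rcases eq_or_lt_of_le ht with rfl | hlt
        · exact hch_j₀
        · exact hch_lo t hlt
      have Tch : IsTiling μ.ord (j₀ + κ) ch := by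
        refine ⟨?_, ?_, ?_, ?_⟩
        · rw [hch_eq_c 0 ((zero_le (a := j₀)))]
          exact T.zero
        · rw [hch_hi (j₀ + κ) ((le_self_add (a := _) (b := _))), Ordinal.add_sub_cancel, Tcs.top]
          exact absorb hμ hβj₀
        · intro t ht t' ht' htt
          by_cases ht'j : t' ≤ j₀
          · have htj : t ≤ j₀ := (htt.le.trans ht'j)
            rw [hch_eq_c t htj, hch_eq_c t' ht'j]
            exact T.mono (htj.trans hj₀η.le) (ht'j.trans hj₀η.le) htt
          · have hjt' : j₀ < t' := not_le.1 ht'j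
            have h2 : 0 < cs (t' - j₀) := by
              have h3 : (0 : Ordinal) < t' - j₀ := pos_sub_of_lt hjt'
              have h4 := Tcs.mono ((zero_le (a := κ))) (Ordinal.sub_le.2 ht') h3
              rwa [Tcs.zero] at h4
            by_cases htj : t ≤ j₀
            · have h5 : ch t ≤ β j₀ := by
                rw [hch_eq_c t htj, ← hch_j₀, hch_eq_c j₀ le_rfl]
                exact T.mono_le htj hj₀η.le
              have h6 : β j₀ < ch t' := by
                rw [hch_hi t' hjt'.le]
                exact lt_add_of_pos_right _ h2
              exact h5.trans_lt h6
            · have hjt : j₀ < t := not_le.1 htj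
              rw [hch_hi t hjt.le, hch_hi t' hjt'.le]
              apply add_lt_add_right
              exact Tcs.mono (Ordinal.sub_le.2 ht)
                (Ordinal.sub_le.2 ht')
                ((sub_lt_sub_iff hjt.le (hjt.le.trans htt.le)).2 htt)
        · intro t ht hlim x hx
          by_cases htj : t ≤ j₀
          · rw [hch_eq_c t htj]
            apply T.cont (htj.trans hj₀η.le) hlim
            intro k hk
            have := hx k hk
            rwa [hch_eq_c k ((hk.le.trans htj))] at this
          · have hjt : j₀ < t := not_le.1 htj
            have hut : j₀ + (t - j₀) = t := Ordinal.add_sub_cancel_of_le hjt.le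
            have hulim : Order.IsSuccLimit (t - j₀) := by
              rcases SingExtAux.zero_or_succ_or_limit' (t - j₀) with h0 | ⟨v, hv⟩ | h
              · exact absurd h0 (pos_sub_of_lt hjt).ne'
              · exfalso
                rw [← Ordinal.add_one_eq_succ] at hv
                have hteq : t = (j₀ + v) + 1 := by rw [← hut, hv, ← add_assoc]
                have hvt : j₀ + v < t := by
                  rw [hteq]; exact lt_add_of_pos_right _ one_pos
                have hsucc := hlim.succ_lt hvt
                rw [← Ordinal.add_one_eq_succ, ← hteq] at hsucc
                exact absurd hsucc (lt_irrefl t)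
              · exact h
            have hβx : β j₀ ≤ x := by
              have := hx j₀ hjt
              rwa [hch_j₀] at this
            rw [hch_hi t hjt.le]
            have h7 : cs (t - j₀) ≤ x - β j₀ := by
              apply Tcs.cont (Ordinal.sub_le.2 ht) hulim
              intro w hw
              have hjw : j₀ + w < t := by
                rw [← hut]; exact add_lt_add_right hw j₀
              have h8 := hx (j₀ + w) hjw
              rw [hch_hi (j₀ + w) ((le_self_add (a := _) (b := _))), Ordinal.add_sub_cancel] at h8
              rw [← add_le_add_iff_left (β j₀), Ordinal.add_sub_cancel_of_le hβx]
              exact h8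
            calc β j₀ + cs (t - j₀) ≤ β j₀ + (x - β j₀) := add_le_add_right h7 _
              _ = x := Ordinal.add_sub_cancel_of_le hβx
      have hchlim : Order.IsSuccLimit (j₀ + κ) := Ordinal.isSuccLimit_add j₀ hκlim
      have hchlt : j₀ + κ < μ.ord := Ordinal.isPrincipal_add_ord hμ hj₀μ hκlt
      have hindep := indep hμ P hP Tch hchlim hchlt Tcs hκlim hκlt a
      have hs2 : P.prod (j₀ + κ) (pieceSeq P ch a) = some s := hindep.trans hs
      -- piece identities for ch
      have hchpe_lo : ∀ t < j₀, ch (t + 1) - ch t = ε t := by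
        intro t ht
        have h1 := hpe t (ht.trans hj₀η)
        rw [hch_eq_c (t + 1) (succ_le_of_lt' ht), hch_eq_c t ht.le]
        exact h1
      have hchpe_hi : ∀ w, ch (j₀ + w + 1) - ch (j₀ + w) = cs (w + 1) - cs w := by
        intro w
        have h1 : ch (j₀ + w) = β j₀ + cs w := by
          rw [hch_hi (j₀ + w) ((le_self_add (a := _) (b := _))), Ordinal.add_sub_cancel]
        have h2 : ch (j₀ + w + 1) = β j₀ + cs (w + 1) := by
          rw [add_assoc, hch_hi (j₀ + (w + 1)) ((le_self_add (a := _) (b := _))), Ordinal.add_sub_cancel]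
        rw [h1, h2, Ordinal.add_sub_add_cancel]
      -- the grouping tiling
      set e : Ordinal.{u} → Ordinal.{u} := fun j => if j ≤ j₀ then j else j₀ + κ with he
      have he_lo : ∀ j ≤ j₀, e j = j := fun j hj => if_pos hj
      have he_hi : e (j₀ + 1) = j₀ + κ := if_neg (by
        intro h
        exact absurd h (not_le.2 (lt_add_of_pos_right j₀ one_pos)))
      have Te : IsTiling (j₀ + κ) (j₀ + 1) e := by
        refine ⟨he_lo 0 ((zero_le (a := j₀))), he_hi, ?_, ?_⟩
        · intro j hj k hk hjk
          by_cases hkj : k ≤ j₀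
          · rw [he_lo j (hjk.le.trans hkj), he_lo k hkj]
            exact hjk
          · have hkeq : k = j₀ + 1 := le_antisymm hk (succ_le_of_lt' (not_le.1 hkj))
            have hjlt : j ≤ j₀ := by
              have : j < j₀ + 1 := hjk.trans_le hkeq.le
              rwa [Ordinal.add_one_eq_succ, Order.lt_succ_iff] at this
            rw [he_lo j hjlt, hkeq, he_hi]
            exact lt_of_le_of_lt hjlt (lt_add_of_pos_right j₀ hκlim.pos)
        · intro j hj hlim x hx
          have hjle : j ≤ j₀ := by
            rcases eq_or_lt_of_le hj with rfl | hlt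
            · exfalso
              have := hlim.succ_lt (lt_add_of_pos_right j₀ one_pos)
              rw [← Ordinal.add_one_eq_succ] at this
              exact absurd rfl this.ne'
            · rwa [Ordinal.add_one_eq_succ, Order.lt_succ_iff] at hlt
          rw [he_lo j hjle]
          by_contra hh
          have hxj : x < j := not_le.1 hh
          have hx1 : x + 1 < j := by
            rw [Ordinal.add_one_eq_succ]; exact hlim.succ_lt hxj
          have := hx (x + 1) hx1
          rw [he_lo (x + 1) ((hx1.le.trans hjle))] at this
          exact absurd this (by simp)
      have hη1pos : (0 : Ordinal) < j₀ + 1 := lt_of_le_of_lt ((zero_le (a := j₀)))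
        (lt_add_of_pos_right j₀ one_pos)
      obtain ⟨B, hB, hBtop⟩ := ord_tiling P Te hη1pos hs2
      refine ⟨B, ?_, ?_⟩
      · intro j hj
        have hjle : j ≤ j₀ := by
          rwa [Ordinal.add_one_eq_succ, Order.lt_succ_iff] at hj
        rcases eq_or_lt_of_le hjle with rfl | hjlt
        · -- the last, large piece
          have hBj := hB j hj
          rw [he_lo j le_rfl, he_hi, Ordinal.add_sub_cancel] at hBj
          rw [hεj₀, hQfμ]
          have hpt : ∀ t < κ, pieceSeq P cs (fun γ => a (β j + γ)) t
              = pieceSeq P ch a (j + t) := by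
            intro t ht
            have h1 := pieces_def P hP Tch hchlim a (j + t) (add_lt_add_right ht j)
            rw [hchpe_hi t, hch_hi (j + t) ((le_self_add (a := _) (b := _))), Ordinal.add_sub_cancel] at h1
            have hfn : (fun γ => a (β j + cs t + γ)) = fun γ => a (β j + (cs t + γ)) := by
              funext γ; rw [add_assoc]
            rw [hfn] at h1
            have h2 := pieces_def P hP Tcs hκlim (fun γ => a (β j + γ)) t ht
            exact Option.some.inj (h2.symm.trans h1)
          calc P.prod κ (pieceSeq P cs fun γ => a (β j + γ))
              = P.prod κ (fun t => pieceSeq P ch a (j + t)) := P.congr _ _ _ hpt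
            _ = some (B j) := hBj
        · -- small pieces
          have hBj := hB j hj
          rw [he_lo j hjle, he_lo (j + 1) (succ_le_of_lt' hjlt),
            Ordinal.add_sub_cancel, P.unary] at hBj
          have hBeq : B j = pieceSeq P ch a j := by
            have := Option.some.inj hBj
            rw [← this, add_zero]
          have hεsm : ε j < μ.ord := by
            rw [← hpe j hj]
            refine lt_of_le_of_lt (Ordinal.sub_le_self _ _) ?_
            exact T.lt_top (lt_of_le_of_lt (succ_le_of_lt' hjlt) hj₀η)
          rw [hQfne (ε j) hεsm.ne]
          have h1 := pieces_def P hP Tch hchlim a j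
            (lt_of_lt_of_le hjlt ((le_self_add (a := _) (b := _))))
          rw [hchpe_lo j hjlt, hch_lo j hjlt] at h1
          rw [hBeq]
          exact h1
      · have hη1lt : j₀ + 1 < μ.ord := by
          rw [Ordinal.add_one_eq_succ]
          exact hμlim.succ_lt hj₀μ
        rw [hQfne (j₀ + 1) hη1lt.ne]
        exact hBtop
    · -- limit case
      have hps := pieces_def P hP T hηlim a
      have hsmallpieces : ∀ j < η, ε j < μ.ord := by
        intro j hj
        have hj1 : j + 1 < η := by
          rw [Ordinal.add_one_eq_succ]; exact hηlim.succ_lt hj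
        rw [← hpe j hj]
        exact lt_of_le_of_lt (Ordinal.sub_le_self _ _) (T.lt_top hj1)
      have hpieceQ : ∀ j < η, Qf (ε j) (fun γ => a (β j + γ))
          = some (pieceSeq P (fun j => if j = η then μ.ord else β j) a j) := by
        intro j hj
        rw [hQfne (ε j) (hsmallpieces j hj).ne]
        have h1 := hps j hj
        rw [hpe j hj, hcβ j hj] at h1
        exact h1
      rcases eq_or_lt_of_le hηδ with hημ | hηlt
      · -- η = μ.ord
        subst hημ
        refine ⟨pieceSeq P (fun j => if j = μ.ord then μ.ord else β j) a, hpieceQ, ?_⟩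
        have hcomp : IsTiling μ.ord κ (fun t => (if cs t = μ.ord then μ.ord else β (cs t))) :=
          compTiling T Tcs
        rw [hQfμ]
        have hindep := indep hμ P hP hcomp hκlim hκlt Tcs hκlim hκlt a
        have hcompeq : ∀ j < κ,
            pieceSeq P cs (pieceSeq P (fun j => if j = μ.ord then μ.ord else β j) a) j
            = pieceSeq P (fun t => (if cs t = μ.ord then μ.ord else β (cs t))) a j := by
          intro j hj
          have hsj := pieces_def P hP hcomp hκlim a j hj
          have hgp := group_pieces P T Tcs hps hj hsj
          have hrfl : pieceSeq P cs (pieceSeq P (fun j => if j = μ.ord then μ.ord else β j) a) j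
              = (P.prod (cs (j + 1) - cs j) (fun γ =>
                  pieceSeq P (fun j => if j = μ.ord then μ.ord else β j) a (cs j + γ))).getD
                  (pieceSeq P (fun j => if j = μ.ord then μ.ord else β j) a 0) := rfl
          rw [hrfl, hgp, Option.getD_some]
        calc P.prod κ (pieceSeq P cs (pieceSeq P (fun j => if j = μ.ord then μ.ord else β j) a))
            = P.prod κ (pieceSeq P (fun t => (if cs t = μ.ord then μ.ord else β (cs t))) a) :=
              P.congr _ _ _ hcompeq
          _ = some s := hindep.trans hs
      · -- η < μ.ord
        refine ⟨pieceSeq P (fun j => if j = η then μ.ord else β j) a, hpieceQ, ?_⟩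
        rw [hQfne η hηlt.ne]
        have hindep := indep hμ P hP T hηlim hηlt Tcs hκlim hκlt a
        exact hindep.trans hs
  refine ⟨⟨Qf, hcongr, hunary, hord⟩, hQfμ, ?_, ?_⟩
  · intro δ a
    by_cases hδ : δ = μ.ord
    · subst hδ
      show (Qf μ.ord a).isSome ↔ _
      rw [hQfμ]
      constructor
      · intro _
        exact ⟨hμlim.pos, le_rfl⟩
      · intro _
        exact (hP _ _).2 ⟨hκlim.pos, hκlt⟩
    · show (Qf δ a).isSome ↔ _
      rw [hQfne δ hδ, hP δ a]
      constructor
      · rintro ⟨h1, h2⟩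
        exact ⟨h1, h2.le⟩
      · rintro ⟨h1, h2⟩
        exact ⟨h1, lt_of_le_of_ne h2 hδ⟩
  · intro δ a s h
    have hd : 0 < δ ∧ δ < μ.ord := (hP δ a).1 (by rw [h]; rfl)
    show Qf δ a = some s
    rw [hQfne δ hd.2.ne]
    exact h

theorem posemigroup_ext {Q' Q : PartialOrdinalSemigroup S}
    (h : Q'.prod = Q.prod) : Q' = Q := by
  cases Q' with
  | mk p' c' u' o' =>
    cases Q with
    | mk p c u o =>
      have hp : p' = p := h
      subst hp
      rfl

end SingExtAux

/-- If `μ` is a singular cardinal, every `<μ`-semigroup expands uniquely to a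
`≤μ`-semigroup; moreover in any such expansion the product of a `μ`-indexed sequence is
computed, via any strictly increasing continuous cofinal sequence `(β j)_{j < cf μ}` in
`μ` with `β 0 = 0`, as `Π_{j<cf μ} Π_{i ∈ [β j, β (j+1))} a i` (so the value is
independent of the chosen cofinal sequence). -/
theorem singular_extension {S : Type u} (μ : Cardinal.{u}) (hμ : ℵ₀ ≤ μ)
    (hsing : μ.ord.cof < μ) (P : PartialOrdinalSemigroup S)
    (hP : DomExactly P (fun δ => 0 < δ ∧ δ < μ.ord)) :
    (∃! Q : PartialOrdinalSemigroup S,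
      DomExactly Q (fun δ => 0 < δ ∧ δ ≤ μ.ord) ∧ Extends Q P) ∧
    (∀ Q : PartialOrdinalSemigroup S,
      DomExactly Q (fun δ => 0 < δ ∧ δ ≤ μ.ord) → Extends Q P →
      ∀ β : Ordinal.{u} → Ordinal.{u},
        (∀ j < μ.ord.cof.ord, ∀ k < μ.ord.cof.ord, j < k → β j < β k) →
        (∀ j < μ.ord.cof.ord, Order.IsSuccLimit j → β j = sSup (β '' Set.Iio j)) →
        (∀ j < μ.ord.cof.ord, β j < μ.ord) →
        (∀ x < μ.ord, ∃ j < μ.ord.cof.ord, x ≤ β j) →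
        β 0 = 0 →
        ∀ (a : Ordinal.{u} → S) (s : S), Q.prod μ.ord a = some s →
          ∃ b : Ordinal.{u} → S,
            (∀ j < μ.ord.cof.ord,
              P.prod (β (j + 1) - β j) (fun γ => a (β j + γ)) = some (b j)) ∧
            P.prod μ.ord.cof.ord b = some s) := by
  classical
  have hμlim : Order.IsSuccLimit μ.ord := Cardinal.isSuccLimit_ord hμ
  have hκlim : Order.IsSuccLimit μ.ord.cof.ord :=
    Cardinal.isSuccLimit_ord (Ordinal.aleph0_le_cof.2 hμlim)
  have hκlt : μ.ord.cof.ord < μ.ord := Cardinal.ord_lt_ord.2 hsing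
  obtain ⟨cs, Tcs⟩ := SingExtAux.exists_base_tiling μ hμ
  obtain ⟨Q, hQμ, hQdom, hQext⟩ := SingExtAux.exists_ext hμ P hP Tcs hκlim hκlt
  have huniq : ∀ Q' : PartialOrdinalSemigroup S,
      DomExactly Q' (fun δ => 0 < δ ∧ δ ≤ μ.ord) → Extends Q' P →
      ∀ δ a, Q'.prod δ a = Q.prod δ a := by
    intro Q' hdom' hext' δ a
    by_cases hδ : δ = μ.ord
    · subst hδ
      have h1 : (Q'.prod μ.ord a).isSome := (hdom' _ a).2 ⟨hμlim.pos, le_rfl⟩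
      obtain ⟨s, hs⟩ := Option.isSome_iff_exists.1 h1
      have h2 := (SingExtAux.value_forced hμ P Q' hP hdom' hext' Tcs hκlim hκlt a s hs).2
      rw [hs, hQμ a, h2]
    · by_cases hd : 0 < δ ∧ δ < μ.ord
      · have h1 : (P.prod δ a).isSome := (hP δ a).2 hd
        obtain ⟨s, hs⟩ := Option.isSome_iff_exists.1 h1
        rw [hext' δ a s hs, hQext δ a s hs]
      · have h3 : ¬(0 < δ ∧ δ ≤ μ.ord) := by
          intro hc
          exact hd ⟨hc.1, lt_of_le_of_ne hc.2 hδ⟩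
        have h4 : Q'.prod δ a = none := by
          rw [← Option.not_isSome_iff_eq_none, hdom' δ a]
          exact h3
        have h5 : Q.prod δ a = none := by
          rw [← Option.not_isSome_iff_eq_none, hQdom δ a]
          exact h3
        rw [h4, h5]
  constructor
  · refine ⟨Q, ⟨hQdom, hQext⟩, ?_⟩
    rintro Q' ⟨hdom', hext'⟩
    exact SingExtAux.posemigroup_ext
      (funext fun δ => funext fun a => huniq Q' hdom' hext' δ a)
  · intro Q2 hdom2 hext2 β hmono hcontl hlt hcof hβ0 a s hs
    set cβ : Ordinal.{u} → Ordinal.{u} :=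
      fun j => if j = μ.ord.cof.ord then μ.ord else β j with hcβ
    have hcβne : ∀ j < μ.ord.cof.ord, cβ j = β j := fun j hj => if_neg hj.ne
    have hcβtop : cβ μ.ord.cof.ord = μ.ord := if_pos rfl
    have Tβ : SingExtAux.IsTiling μ.ord μ.ord.cof.ord cβ := by
      refine ⟨?_, hcβtop, ?_, ?_⟩
      · rw [hcβne 0 hκlim.pos, hβ0]
      · intro j hj k hk hjk
        rcases eq_or_lt_of_le hk with rfl | hkκ
        · rw [hcβne j hjk, hcβtop]
          exact hlt j hjk
        · rw [hcβne j (hjk.trans hkκ), hcβne k hkκ]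
          exact hmono j (hjk.trans hkκ) k hkκ hjk
      · intro j hj hlim x hx
        rcases eq_or_lt_of_le hj with rfl | hjκ
        · rw [hcβtop]
          by_contra hh
          have hxμ : x < μ.ord := not_le.1 hh
          have hx1 : x + 1 < μ.ord := by
            rw [Ordinal.add_one_eq_succ]
            exact hμlim.succ_lt hxμ
          obtain ⟨j', hj', hx1b⟩ := hcof (x + 1) hx1
          have := hx j' hj'
          rw [hcβne j' hj'] at this
          have : x + 1 ≤ x := hx1b.trans this
          exact absurd this (by simp)
        · rw [hcβne j hjκ, hcontl j hjκ hlim]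
          have hne : (β '' Set.Iio j).Nonempty := ⟨β 0, 0, hlim.pos, rfl⟩
          apply csSup_le hne
          rintro y ⟨k, hk, rfl⟩
          have := hx k hk
          rwa [hcβne k (hk.trans hjκ)] at this
    have h := SingExtAux.value_forced hμ P Q2 hP hdom2 hext2 Tβ hκlim hκlt a s hs
    refine ⟨SingExtAux.pieceSeq P cβ a, ?_, h.2⟩
    intro j hj
    have hj1 : j + 1 < μ.ord.cof.ord := by
      rw [Ordinal.add_one_eq_succ]
      exact hκlim.succ_lt hj
    have h1 := h.1 j hj
    rwa [hcβne (j + 1) hj1, hcβne j hj] at h1
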